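/- For every complex number α and every natural number n ≥ 1: Σ_{k=0}^n C(n,k) H_k(α) = 2^n · ( H_n( (1 + α)/2 ) − H_n( 1/2 ) ). -/
import Mathlib


open Finset

/-- The generalized harmonic number `H_n(α) = ∑_{k=1}^n α^k / k`. -/
noncomputable def genHarmonic (α : ℂ) (n : ℕ) : ℂ :=
  ∑ k ∈ Finset.Icc 1 n, α ^ k / (k : ℂ)

lemma gh_succ (α : ℂ) (k : ℕ) :
    genHarmonic α (k+1) = genHarmonic α k + α ^ (k+1) / ((k:ℂ)+1) := by
  unfold genHarmonic
  rw [Finset.sum_Icc_succ_top (by omega : 1 ≤ k+1)]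
  push_cast
  ring

lemma gh_zero (α : ℂ) : genHarmonic α 0 = 0 := by
  simp [genHarmonic]

lemma aux2 (α : ℂ) (n : ℕ) :
    ∑ k ∈ Finset.range (n+1), (n.choose k : ℂ) * (α ^ (k+1) / ((k:ℂ)+1)) =
      ((1+α) ^ (n+1) - 1) / ((n:ℂ)+1) := by
  have hn1 : ((n:ℂ)+1) ≠ 0 := Nat.cast_add_one_ne_zero n
  rw [eq_div_iff hn1, Finset.sum_mul]
  have step : ∀ k ∈ Finset.range (n+1),
      (n.choose k : ℂ) * (α ^ (k+1) / ((k:ℂ)+1)) * ((n:ℂ)+1)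
        = ((n+1).choose (k+1) : ℂ) * α ^ (k+1) := by
    intro k _
    have hk1 : ((k:ℂ)+1) ≠ 0 := Nat.cast_add_one_ne_zero k
    have h := Nat.add_one_mul_choose_eq n k
    have h' : ((n:ℂ)+1) * (n.choose k : ℂ) = ((n+1).choose (k+1) : ℂ) * ((k:ℂ)+1) := by
      exact_mod_cast congrArg (Nat.cast : ℕ → ℂ) h
    field_simp
    linear_combination α ^ (k+1) * h'
  rw [Finset.sum_congr rfl step]
  have hb : (1+α) ^ (n+1) = ∑ k ∈ Finset.range (n+2), α ^ k * ((n+1).choose k : ℂ) := by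
    rw [add_comm 1 α, add_pow]
    simp
  have hb2 : (1+α) ^ (n+1) - 1
      = ∑ k ∈ Finset.range (n+1), α ^ (k+1) * ((n+1).choose (k+1) : ℂ) := by
    rw [hb, Finset.sum_range_succ']; simp
  rw [hb2]
  exact Finset.sum_congr rfl fun k _ => mul_comm _ _

lemma step_sum (α : ℂ) (n : ℕ) :
    ∑ k ∈ Finset.range (n+2), ((n+1).choose k : ℂ) * genHarmonic α k
      = 2 * ∑ k ∈ Finset.range (n+1), (n.choose k : ℂ) * genHarmonic α k
        + ((1+α) ^ (n+1) - 1) / ((n:ℂ)+1) := by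
  rw [Finset.sum_range_succ']
  simp only [gh_zero, mul_zero, add_zero]
  have key : ∀ k ∈ Finset.range (n+1),
      ((n+1).choose (k+1) : ℂ) * genHarmonic α (k+1)
        = ((n.choose k : ℂ) * genHarmonic α k
            + (n.choose k : ℂ) * (α ^ (k+1) / ((k:ℂ)+1)))
          + (n.choose (k+1) : ℂ) * genHarmonic α (k+1) := by
    intro k _
    rw [Nat.choose_succ_succ, gh_succ]
    push_cast
    ring
  rw [Finset.sum_congr rfl key, Finset.sum_add_distrib, Finset.sum_add_distrib, aux2]
  have h2 : ∑ k ∈ Finset.range (n+1), (n.choose (k+1) : ℂ) * genHarmonic α (k+1)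
      = ∑ k ∈ Finset.range (n+1), (n.choose k : ℂ) * genHarmonic α k := by
    have h := Finset.sum_range_succ'
      (fun k => (n.choose k : ℂ) * genHarmonic α k) (n+1)
    rw [Finset.sum_range_succ] at h
    simp only [gh_zero, mul_zero, add_zero, Nat.choose_succ_self,
      Nat.cast_zero, zero_mul] at h
    exact h.symm
  rw [h2]; ring

theorem stmt_12 (α : ℂ) (n : ℕ) (hn : 1 ≤ n) :
    ∑ k ∈ Finset.range (n + 1), (Nat.choose n k : ℂ) * genHarmonic α k =
      2 ^ n * (genHarmonic ((1 + α) / 2) n - genHarmonic (1 / 2) n) := by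
  induction n, hn using Nat.le_induction with
  | base =>
    simp [Finset.sum_range_succ, gh_zero, genHarmonic]
    ring
  | succ n hn ih =>
    rw [show n + 1 + 1 = n + 2 from rfl, step_sum, ih, gh_succ, gh_succ]
    have hn1 : ((n:ℂ)+1) ≠ 0 := Nat.cast_add_one_ne_zero n
    have e1 : ((1+α)/2) ^ (n+1) = (1+α) ^ (n+1) / 2 ^ (n+1) := div_pow _ _ _
    have e2 : ((1:ℂ)/2) ^ (n+1) = 1 / 2 ^ (n+1) := by
      rw [div_pow, one_pow]
    rw [e1, e2]
    have h2 : (2:ℂ) ^ (n+1) ≠ 0 := pow_ne_zero _ two_ne_zero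
    field_simp
    ring
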